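/- For n×n positive definite complex matrices A, B and n×n positive semidefinite complex matrices C, D, one has Tr[(A−B)(B⁻¹−A⁻¹) + (C−D)((B+D)⁻¹−(A+C)⁻¹)] ≥ |Tr[(C−D)(B+D)⁻¹(A−B)(A+C)⁻¹]|, where both traces are real numbers. -/

import Mathlib

open Matrix ComplexOrder

variable {n : ℕ}

private lemma trace_psd_nonneg {P : Matrix (Fin n) (Fin n) ℂ} (hP : P.PosSemidef) :
    0 ≤ P.trace := by
  rw [Matrix.trace]
  apply Finset.sum_nonneg
  intro i _
  exact hP.diag_nonneg

private lemma trace_mul_psd_nonneg {P Q : Matrix (Fin n) (Fin n) ℂ}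
    (hP : P.PosSemidef) (hQ : Q.PosSemidef) : 0 ≤ (P * Q).trace := by
  obtain ⟨R, rfl⟩ : ∃ R : Matrix (Fin n) (Fin n) ℂ, P = Rᴴ * R := by
    open scoped MatrixOrder Norms.L2Operator in
    exact (CStarAlgebra.nonneg_iff_eq_star_mul_self.mp hP.nonneg)
  have h : (Rᴴ * R * Q).trace = (R * Q * Rᴴ).trace := by
    rw [Matrix.mul_assoc, Matrix.trace_mul_comm, Matrix.mul_assoc]
  rw [h]
  exact trace_psd_nonneg (hQ.mul_mul_conjTranspose_same R)

private lemma trace_herm_mul_real {P Q : Matrix (Fin n) (Fin n) ℂ}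
    (hP : P.IsHermitian) (hQ : Q.IsHermitian) : ((P * Q).trace).im = 0 := by
  have h : star ((P * Q).trace) = (P * Q).trace := by
    calc star ((P * Q).trace) = ((P * Q)ᴴ).trace := (Matrix.trace_conjTranspose _).symm
    _ = (Qᴴ * Pᴴ).trace := by rw [Matrix.conjTranspose_mul]
    _ = (Q * P).trace := by rw [hP.eq, hQ.eq]
    _ = (P * Q).trace := Matrix.trace_mul_comm _ _
  exact Complex.conj_eq_iff_im.mp h

private lemma aux_inv_sub_inv {A B : Matrix (Fin n) (Fin n) ℂ}
    (hA : A.PosDef) (hB : B.PosDef) : B⁻¹ - A⁻¹ = B⁻¹ * (A - B) * A⁻¹ := by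
  have hA' : A * A⁻¹ = 1 := Matrix.mul_nonsing_inv _ ((Matrix.isUnit_iff_isUnit_det A).mp hA.isUnit)
  have hB' : B⁻¹ * B = 1 := Matrix.nonsing_inv_mul _ ((Matrix.isUnit_iff_isUnit_det B).mp hB.isUnit)
  have h : B⁻¹ * (A - B) * A⁻¹ = B⁻¹ * (A * A⁻¹) - (B⁻¹ * B) * A⁻¹ := by noncomm_ring
  rw [h, hA', hB', mul_one, one_mul]

private lemma aux_inv_sub_inv' {A B : Matrix (Fin n) (Fin n) ℂ}
    (hA : A.PosDef) (hB : B.PosDef) : B⁻¹ - A⁻¹ = A⁻¹ * (A - B) * B⁻¹ := by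
  have hA' : A⁻¹ * A = 1 := Matrix.nonsing_inv_mul _ ((Matrix.isUnit_iff_isUnit_det A).mp hA.isUnit)
  have hB' : B * B⁻¹ = 1 := Matrix.mul_nonsing_inv _ ((Matrix.isUnit_iff_isUnit_det B).mp hB.isUnit)
  have h : A⁻¹ * (A - B) * B⁻¹ = (A⁻¹ * A) * B⁻¹ - A⁻¹ * (B * B⁻¹) := by noncomm_ring
  rw [h, hA', hB', mul_one, one_mul]

private lemma aux_psd_inv_sub {B D : Matrix (Fin n) (Fin n) ℂ}
    (hB : B.PosDef) (hD : D.PosSemidef) : (B⁻¹ - (B + D)⁻¹).PosSemidef := by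
  have hBD : (B + D).PosDef := hB.add_posSemidef hD
  set T := (B + D)⁻¹ with hTdef
  have h1 : B⁻¹ - T = T * D * B⁻¹ := by
    have := aux_inv_sub_inv' hBD hB
    rwa [add_sub_cancel_left] at this
  have h2 : B⁻¹ = T + B⁻¹ * D * T := by
    have h := aux_inv_sub_inv hBD hB
    rw [add_sub_cancel_left, ← hTdef] at h
    rw [← h]
    abel
  have key : B⁻¹ - T = T * D * T + T * D * (B⁻¹ * D * T) := by
    calc B⁻¹ - T = T * D * B⁻¹ := h1
    _ = T * D * (T + B⁻¹ * D * T) := by rw [← h2]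
    _ = T * D * T + T * D * (B⁻¹ * D * T) := by noncomm_ring
  rw [key]
  have hT : T.IsHermitian := hBD.inv.isHermitian
  have p1 : (Tᴴ * D * T).PosSemidef := hD.conjTranspose_mul_mul_same T
  have p2 : ((D * T)ᴴ * B⁻¹ * (D * T)).PosSemidef :=
    (hB.inv.posSemidef).conjTranspose_mul_mul_same (D * T)
  rw [hT.eq] at p1
  rw [Matrix.conjTranspose_mul, hT.eq, hD.isHermitian.eq] at p2
  have h3 : T * D * (B⁻¹ * D * T) = T * D * B⁻¹ * (D * T) := by noncomm_ring
  rw [h3]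
  exact p1.add p2

private lemma re_nonneg_of_nonneg {z : ℂ} (h : 0 ≤ z) : 0 ≤ z.re := by
  simpa using (Complex.le_def.mp h).1

private lemma im_eq_zero_of_nonneg {z : ℂ} (h : 0 ≤ z) : z.im = 0 := by
  simpa using (Complex.le_def.mp h).2.symm

theorem trace_refined_ineq {n : ℕ} (A B C D : Matrix (Fin n) (Fin n) ℂ)
    (hA : A.PosDef) (hB : B.PosDef) (hC : C.PosSemidef) (hD : D.PosSemidef) :
    (((A - B) * (B⁻¹ - A⁻¹) + (C - D) * ((B + D)⁻¹ - (A + C)⁻¹)).trace).im = 0 ∧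
    (((C - D) * (B + D)⁻¹ * (A - B) * (A + C)⁻¹).trace).im = 0 ∧
    (((A - B) * (B⁻¹ - A⁻¹) + (C - D) * ((B + D)⁻¹ - (A + C)⁻¹)).trace).re ≥
      |(((C - D) * (B + D)⁻¹ * (A - B) * (A + C)⁻¹).trace).re| := by
  have hAC : (A + C).PosDef := hA.add_posSemidef hC
  have hBD : (B + D).PosDef := hB.add_posSemidef hD
  set X := A - B with hXdef
  set Y := C - D with hYdef
  set S := (A + C)⁻¹ with hSdef
  set T := (B + D)⁻¹ with hTdef
  have hX : X.IsHermitian := hA.isHermitian.sub hB.isHermitian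
  have hY : Y.IsHermitian := hC.isHermitian.sub hD.isHermitian
  have hSpd : S.PosDef := hAC.inv
  have hTpd : T.PosDef := hBD.inv
  have key1 : B⁻¹ - A⁻¹ = B⁻¹ * X * A⁻¹ := aux_inv_sub_inv hA hB
  have key2 : T - S = T * (X + Y) * S := by
    have h := aux_inv_sub_inv hAC hBD
    rw [← hTdef, ← hSdef] at h
    have he : A + C - (B + D) = X + Y := by rw [hXdef, hYdef]; abel
    rwa [he] at h
  have m1 : X * (B⁻¹ - A⁻¹) = X * B⁻¹ * X * A⁻¹ := by rw [key1]; noncomm_ring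
  have m2 : Y * (T - S) = Y * T * X * S + Y * T * Y * S := by rw [key2]; noncomm_ring
  set e1 := (X * B⁻¹ * X * A⁻¹).trace with he1def
  set t := (Y * T * X * S).trace with htdef
  set e2 := (Y * T * Y * S).trace with he2def
  set f := (X * T * X * S).trace with hfdef
  have htotal : ((X * (B⁻¹ - A⁻¹) + Y * (T - S)).trace) = e1 + t + e2 := by
    rw [trace_add, m1, m2, trace_add, he1def, htdef, he2def]; ring
  -- positivity
  have hP1 : (X * B⁻¹ * X).PosSemidef := by
    have h := (hB.inv.posSemidef).conjTranspose_mul_mul_same X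
    rwa [hX.eq] at h
  have hQ2 : (Y * T * Y).PosSemidef := by
    have h := (hTpd.posSemidef).conjTranspose_mul_mul_same Y
    rwa [hY.eq] at h
  have hXTX : (X * T * X).PosSemidef := by
    have h := (hTpd.posSemidef).conjTranspose_mul_mul_same X
    rwa [hX.eq] at h
  have hZps : ((X + Y) * T * (X + Y)).PosSemidef := by
    have h := (hTpd.posSemidef).conjTranspose_mul_mul_same (X + Y)
    rwa [(hX.add hY).eq] at h
  have he1 : 0 ≤ e1 := trace_mul_psd_nonneg hP1 hA.inv.posSemidef
  have he2 : 0 ≤ e2 := trace_mul_psd_nonneg hQ2 hSpd.posSemidef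
  have hz : 0 ≤ ((X + Y) * T * (X + Y) * S).trace :=
    trace_mul_psd_nonneg hZps hSpd.posSemidef
  -- e1 - f ≥ 0
  have hB1T : (B⁻¹ - T).PosSemidef := by
    have h := aux_psd_inv_sub hB hD
    rwa [← hTdef] at h
  have hA1S : (A⁻¹ - S).PosSemidef := by
    have h := aux_psd_inv_sub hA hC
    rwa [← hSdef] at h
  have hXBTX : (X * (B⁻¹ - T) * X).PosSemidef := by
    have h := hB1T.conjTranspose_mul_mul_same X
    rwa [hX.eq] at h
  have hq1 : 0 ≤ ((X * (B⁻¹ - T) * X) * A⁻¹).trace :=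
    trace_mul_psd_nonneg hXBTX hA.inv.posSemidef
  have hq2 : 0 ≤ ((X * T * X) * (A⁻¹ - S)).trace :=
    trace_mul_psd_nonneg hXTX hA1S
  have hef : e1 - f = ((X * (B⁻¹ - T) * X) * A⁻¹).trace + ((X * T * X) * (A⁻¹ - S)).trace := by
    have hm : X * B⁻¹ * X * A⁻¹ - X * T * X * S
        = (X * (B⁻¹ - T) * X) * A⁻¹ + (X * T * X) * (A⁻¹ - S) := by noncomm_ring
    rw [he1def, hfdef, ← trace_sub, hm, trace_add]
  -- t is real
  have hYTS : ((Y * (T - S)).trace).im = 0 :=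
    trace_herm_mul_real hY (hTpd.isHermitian.sub hSpd.isHermitian)
  have hts : (Y * (T - S)).trace = t + e2 := by rw [m2, trace_add]
  have he2im : e2.im = 0 := im_eq_zero_of_nonneg he2
  have htim : t.im = 0 := by
    have h := congrArg Complex.im hts
    rw [hYTS, Complex.add_im, he2im] at h
    linarith
  -- star t = Tr[XTYS]
  have hstar : (X * T * Y * S).trace = t := by
    have h2 : star t = (X * T * Y * S).trace := by
      rw [htdef, ← Matrix.trace_conjTranspose]
      simp only [Matrix.conjTranspose_mul, hX.eq, hY.eq, hTpd.isHermitian.eq,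
        hSpd.isHermitian.eq]
      rw [Matrix.trace_mul_comm]
      simp only [Matrix.mul_assoc]
    rw [← h2]
    exact Complex.conj_eq_iff_im.mpr htim
  have hzexp : ((X + Y) * T * (X + Y) * S).trace = f + t + t + e2 := by
    have hm : (X + Y) * T * (X + Y) * S
        = X * T * X * S + X * T * Y * S + Y * T * X * S + Y * T * Y * S := by noncomm_ring
    rw [hm, trace_add, trace_add, trace_add, hstar, hfdef, htdef, he2def]
  -- real-part facts
  have ha : 0 ≤ e1.re := re_nonneg_of_nonneg he1
  have hc : 0 ≤ e2.re := re_nonneg_of_nonneg he2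
  have hfe : 0 ≤ e1.re - f.re := by
    have h := congrArg Complex.re hef
    rw [Complex.sub_re, Complex.add_re] at h
    have h1 := re_nonneg_of_nonneg hq1
    have h2 := re_nonneg_of_nonneg hq2
    linarith
  have hzre : 0 ≤ f.re + t.re + t.re + e2.re := by
    have h := congrArg Complex.re hzexp
    have h3 := re_nonneg_of_nonneg hz
    rw [h] at h3
    simpa [Complex.add_re] using h3
  refine ⟨?_, htim, ?_⟩
  · rw [htotal]
    simp [Complex.add_im, im_eq_zero_of_nonneg he1, htim, he2im]
  · rw [htotal]
    rw [Complex.add_re, Complex.add_re, ge_iff_le, abs_le]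
    constructor <;> linarith
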